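/- arXiv:2402.16812 — 7 statements merged into one kernel-verified Lean document; each statement's English description precedes it below -/
import Mathlib

section
/- Let (X,d) be a metric space and μ a Borel measure on X such that v₀ rⁿ ≤ μ(B_r(x)) ≤ V₀ rⁿ for every x ∈ X and every r > 0, where n ≥ 1 is an integer and 0 < v₀ ≤ V₀. Fix p ∈ X, R > 0, Q > 1 and α with 0 < α ≤ min{2, (Q−1)/4}. Then the annulus B_{QR}(p) \ closure(B_R(p)) can be covered by finitely many balls of radius αR with centers in B_{QR}(p) \ closure(B_R(p)), and the number l of balls can be taken to satisfy l ≤ v₀^{−1} (2/α)ⁿ [V₀ (Q + α/2)ⁿ − v₀ (1 − α/2)ⁿ]. -/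
open Metric MeasureTheory Set

/-- Annulus covering lemma: in a metric-measure space with two-sided Euclidean
volume bounds `v₀ rⁿ ≤ μ(B_r(x)) ≤ V₀ rⁿ`, the annulus `B_{QR}(p) \ closure(B_R(p))`
can be covered by at most `v₀⁻¹ (2/α)ⁿ [V₀ (Q+α/2)ⁿ − v₀ (1−α/2)ⁿ]` balls of
radius `αR` centered in the annulus. -/
theorem annulus_covering
    {X : Type*} [MetricSpace X] [MeasurableSpace X] [BorelSpace X] (μ : Measure X)
    (n : ℕ) (hn : 1 ≤ n) (v₀ V₀ : ℝ) (hv₀ : 0 < v₀) (hvV : v₀ ≤ V₀)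
    (hvol : ∀ (x : X) (r : ℝ), 0 < r →
      ENNReal.ofReal (v₀ * r ^ n) ≤ μ (ball x r) ∧
      μ (ball x r) ≤ ENNReal.ofReal (V₀ * r ^ n))
    (p : X) (R Q α : ℝ) (hR : 0 < R) (hQ : 1 < Q)
    (hα : 0 < α) (hα' : α ≤ min 2 ((Q - 1) / 4)) :
    ∃ s : Finset X,
      (↑s : Set X) ⊆ ball p (Q * R) \ closure (ball p R) ∧
      ball p (Q * R) \ closure (ball p R) ⊆ ⋃ c ∈ s, ball c (α * R) ∧
      (s.card : ℝ) ≤ v₀⁻¹ * (2 / α) ^ n *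
        (V₀ * (Q + α / 2) ^ n - v₀ * (1 - α / 2) ^ n) := by
  classical
  have hα2 : α ≤ 2 := hα'.trans (min_le_left _ _)
  have hk0 : (0:ℝ) ≤ 1 - α / 2 := by linarith
  have hK0 : (0:ℝ) < Q + α / 2 := by linarith
  set A : Set X := ball p (Q * R) \ closure (ball p R) with hA
  set E : ℝ := V₀ * (Q + α / 2) ^ n - v₀ * (1 - α / 2) ^ n with hE
  set B : ℝ := v₀⁻¹ * (2 / α) ^ n * E with hB
  set r : ℝ := α * R / 2 with hr
  have hrpos : 0 < r := by positivity
  -- key cardinality bound for separated sets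
  have key : ∀ s : Finset X, (↑s : Set X) ⊆ A →
      (∀ x ∈ s, ∀ y ∈ s, x ≠ y → α * R ≤ dist x y) → (s.card : ℝ) ≤ B := by
    intro s hsA hsep
    have hdisj : (↑s : Set X).PairwiseDisjoint (fun c => ball c r) := by
      intro x hx y hy hxy
      apply ball_disjoint_ball
      have := hsep x hx y hy hxy
      simp only [hr]; linarith
    have hmeas : ∀ c ∈ s, MeasurableSet (ball c r) := fun c _ => measurableSet_ball
    have hsum : ∑ c ∈ s, μ (ball c r) = μ (⋃ c ∈ s, ball c r) :=
      (measure_biUnion_finset hdisj hmeas).symm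
    have hKpos : 0 < (Q + α / 2) * R := by positivity
    -- each small ball sits in the enlarged annulus
    have hsub : (⋃ c ∈ s, ball c r) ⊆
        ball p ((Q + α / 2) * R) \ ball p ((1 - α / 2) * R) := by
      intro x hx
      simp only [mem_iUnion, exists_prop] at hx
      obtain ⟨c, hcs, hxc⟩ := hx
      obtain ⟨hc1, hc2⟩ := hsA hcs
      have hcR : R ≤ dist c p := by
        by_contra h
        exact hc2 (subset_closure (mem_ball.2 (lt_of_not_ge h)))
      rw [mem_ball] at hxc hc1
      constructor
      · rw [mem_ball]
        calc dist x p ≤ dist x c + dist c p := dist_triangle _ _ _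
          _ < r + Q * R := by linarith
          _ ≤ (Q + α / 2) * R := by rw [hr]; nlinarith
      · rw [mem_ball, not_lt]
        have : dist c p ≤ dist c x + dist x p := dist_triangle _ _ _
        rw [dist_comm c x] at this
        nlinarith
    have hsmall : μ (ball p ((1 - α / 2) * R)) ≤ ENNReal.ofReal (V₀ * ((Q + α / 2) * R) ^ n) :=
      le_trans (measure_mono (ball_subset_ball (by nlinarith))) (hvol p _ hKpos).2
    have hsmall_ne : μ (ball p ((1 - α / 2) * R)) ≠ ⊤ :=
      ne_top_of_le_ne_top ENNReal.ofReal_ne_top hsmall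
    have hdiff : μ (ball p ((Q + α / 2) * R) \ ball p ((1 - α / 2) * R)) =
        μ (ball p ((Q + α / 2) * R)) - μ (ball p ((1 - α / 2) * R)) :=
      measure_diff (ball_subset_ball (by nlinarith)) measurableSet_ball.nullMeasurableSet hsmall_ne
    have hlow : ENNReal.ofReal (v₀ * ((1 - α / 2) * R) ^ n) ≤ μ (ball p ((1 - α / 2) * R)) := by
      rcases eq_or_lt_of_le hk0 with h | h
      · have : (1 - α / 2) * R = 0 := by rw [← h, zero_mul]
        rw [this, zero_pow (by omega), mul_zero, ENNReal.ofReal_zero]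
        exact zero_le
      · exact (hvol p _ (by positivity)).1
    have hnonneg : 0 ≤ V₀ * ((Q + α / 2) * R) ^ n - v₀ * ((1 - α / 2) * R) ^ n := by
      have h1 : ((1 - α / 2) * R) ^ n ≤ ((Q + α / 2) * R) ^ n :=
        pow_le_pow_left₀ (by positivity) (by nlinarith) n
      nlinarith [pow_nonneg (mul_nonneg hk0 hR.le) n]
    have hchain : ENNReal.ofReal ((s.card : ℝ) * (v₀ * r ^ n)) ≤
        ENNReal.ofReal (V₀ * ((Q + α / 2) * R) ^ n - v₀ * ((1 - α / 2) * R) ^ n) := by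
      rw [ENNReal.ofReal_mul (by positivity), ENNReal.ofReal_natCast]
      calc (s.card : ENNReal) * ENNReal.ofReal (v₀ * r ^ n)
          ≤ ∑ c ∈ s, μ (ball c r) := by
            rw [← nsmul_eq_mul]
            exact Finset.card_nsmul_le_sum s _ _ (fun c _ => (hvol c r hrpos).1)
        _ = μ (⋃ c ∈ s, ball c r) := hsum
        _ ≤ μ (ball p ((Q + α / 2) * R) \ ball p ((1 - α / 2) * R)) := measure_mono hsub
        _ = μ (ball p ((Q + α / 2) * R)) - μ (ball p ((1 - α / 2) * R)) := hdiff
        _ ≤ ENNReal.ofReal (V₀ * ((Q + α / 2) * R) ^ n) -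
              ENNReal.ofReal (v₀ * ((1 - α / 2) * R) ^ n) :=
            tsub_le_tsub (hvol p _ hKpos).2 hlow
        _ = ENNReal.ofReal (V₀ * ((Q + α / 2) * R) ^ n - v₀ * ((1 - α / 2) * R) ^ n) :=
            (ENNReal.ofReal_sub _ (by positivity)).symm
    have hreal : (s.card : ℝ) * (v₀ * r ^ n) ≤
        V₀ * ((Q + α / 2) * R) ^ n - v₀ * ((1 - α / 2) * R) ^ n :=
      (ENNReal.ofReal_le_ofReal_iff hnonneg).1 hchain
    -- now the real arithmetic
    have hrRn : r ^ n = (α / 2) ^ n * R ^ n := by rw [hr, ← mul_pow]; ring_nf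
    have hfact : V₀ * ((Q + α / 2) * R) ^ n - v₀ * ((1 - α / 2) * R) ^ n = E * R ^ n := by
      rw [hE, mul_pow, mul_pow]; ring
    rw [hrRn, hfact] at hreal
    have hpos : 0 < v₀ * ((α / 2) ^ n * R ^ n) := by positivity
    have h2 : (s.card : ℝ) ≤ E * R ^ n / (v₀ * ((α / 2) ^ n * R ^ n)) := by
      rw [le_div_iff₀ hpos]; linarith
    refine h2.trans_eq ?_
    rw [hB]
    field_simp
    have h1 : α ^ n * α⁻¹ ^ n = 1 := by rw [← mul_pow, mul_inv_cancel₀ hα.ne', one_pow]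
    have h2' : (1 / 2 : ℝ) ^ n * 2 ^ n = 1 := by rw [← mul_pow]; norm_num
    linear_combination (-(E * (1 / 2 : ℝ) ^ n * 2 ^ n)) * h1 - E * h2'
  -- maximal separated set
  let S : Set ℕ := {k | ∃ s : Finset X, (↑s : Set X) ⊆ A ∧
    (∀ x ∈ s, ∀ y ∈ s, x ≠ y → α * R ≤ dist x y) ∧ s.card = k}
  have hS0 : (0 : ℕ) ∈ S := ⟨∅, by simp, by simp, rfl⟩
  have hbdd : BddAbove S := by
    refine ⟨⌊B⌋₊, fun k hk => ?_⟩
    obtain ⟨s, h1, h2, h3⟩ := hk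
    exact Nat.le_floor (h3 ▸ key s h1 h2)
  obtain ⟨s, hsA, hsep, hcard⟩ := Nat.sSup_mem ⟨0, hS0⟩ hbdd
  refine ⟨s, hsA, ?_, key s hsA hsep⟩
  intro x hx
  by_contra hxn
  simp only [mem_iUnion, mem_ball, exists_prop, not_exists, not_and, not_lt] at hxn
  have hxs : x ∉ s := by
    intro h
    have := hxn x h
    rw [dist_self] at this
    nlinarith
  have hins : s.card + 1 ∈ S := by
    refine ⟨insert x s, ?_, ?_, by rw [Finset.card_insert_of_notMem hxs]⟩
    · intro y hy
      rcases Finset.mem_coe.1 hy |> Finset.mem_insert.1 with h | h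
      · exact h ▸ hx
      · exact hsA h
    · intro a ha b hb hab
      rcases Finset.mem_insert.1 ha with h1 | h1 <;> rcases Finset.mem_insert.1 hb with h2 | h2
      · exact absurd (h1.trans h2.symm) hab
      · rw [h1]; exact hxn b h2
      · rw [h2, dist_comm]; exact hxn a h1
      · exact hsep a h1 b h2 hab
  have := le_csSup hbdd hins
  rw [hcard] at this
  omega
end

section
/- Let X be a topological space, f : X → ℝ a continuous function, and γ : [0,1] → X a continuous curve. Let U₁, …, U_k be finitely many nonempty open subsets of X whose union contains the image γ([0,1]), and assume f is bounded on each U_i. Then |f(γ(0)) − f(γ(1))| ≤ Σ_{i=1}^{k} osc_{U_i} f, where osc_U f := sup_{x∈U} f(x) − inf_{x∈U} f(x). -/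
open Set

/-- Chaining lemma (Li–Tam): if a continuous curve `γ : [0,1] → X` is covered by
finitely many nonempty open sets `U₁, …, U_k` on each of which the continuous
function `f` is bounded, then `|f(γ(0)) − f(γ(1))| ≤ Σᵢ osc_{Uᵢ} f`, where
`osc_U f = sup_U f − inf_U f`. -/
theorem oscillation_chaining
    {X : Type*} [TopologicalSpace X] (f : X → ℝ) (hf : Continuous f)
    (γ : ℝ → X) (hγ : ContinuousOn γ (Icc 0 1))
    (k : ℕ) (U : Fin k → Set X)
    (hUne : ∀ i, (U i).Nonempty) (hUopen : ∀ i, IsOpen (U i))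
    (hcover : γ '' Icc 0 1 ⊆ ⋃ i, U i)
    (hbdd : ∀ i, BddAbove (f '' U i) ∧ BddBelow (f '' U i)) :
    |f (γ 0) - f (γ 1)| ≤ ∑ i : Fin k, (sSup (f '' U i) - sInf (f '' U i)) := by
  set osc : Fin k → ℝ := fun i => sSup (f '' U i) - sInf (f '' U i) with hosc
  -- each oscillation is nonnegative
  have hosc_nonneg : ∀ i, 0 ≤ osc i := by
    intro i
    obtain ⟨a, ha⟩ := hUne i
    have h1 : sInf (f '' U i) ≤ f a := csInf_le (hbdd i).2 ⟨a, ha, rfl⟩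
    have h2 : f a ≤ sSup (f '' U i) := le_csSup (hbdd i).1 ⟨a, ha, rfl⟩
    simp only [hosc]
    linarith
  -- two points of the same `U j` have close values
  have hstep : ∀ j, ∀ a ∈ U j, ∀ b ∈ U j, |f a - f b| ≤ osc j := by
    intro j a ha b hb
    have h1 : sInf (f '' U j) ≤ f a := csInf_le (hbdd j).2 ⟨a, ha, rfl⟩
    have h2 : f a ≤ sSup (f '' U j) := le_csSup (hbdd j).1 ⟨a, ha, rfl⟩
    have h3 : sInf (f '' U j) ≤ f b := csInf_le (hbdd j).2 ⟨b, hb, rfl⟩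
    have h4 : f b ≤ sSup (f '' U j) := le_csSup (hbdd j).1 ⟨b, hb, rfl⟩
    rw [abs_sub_le_iff]
    constructor <;> simp only [hosc] <;> linarith
  set x := γ 0 with hx
  set K := γ '' Icc 0 1 with hK
  have hxK : x ∈ K := ⟨0, ⟨le_refl 0, zero_le_one⟩, rfl⟩
  have hyK : γ 1 ∈ K := ⟨1, ⟨zero_le_one, le_refl 1⟩, rfl⟩
  have hKconn : IsPreconnected K := (isPreconnected_Icc).image γ hγ
  -- "good" collections of indices: the whole union of their sets is reachable
  set good : Finset (Fin k) → Prop :=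
    fun s => ∀ z, (∃ i ∈ s, z ∈ U i) → |f x - f z| ≤ ∑ i ∈ s, osc i with hgood
  set C : Set (Fin k) := {j | ∃ s : Finset (Fin k), good s ∧ j ∈ s} with hC
  set A : Set X := ⋃ j ∈ C, U j with hA
  set B : Set X := ⋃ j ∈ Cᶜ, U j with hB
  have hAopen : IsOpen A := isOpen_biUnion fun j _ => hUopen j
  have hBopen : IsOpen B := isOpen_biUnion fun j _ => hUopen j
  have hKAB : K ⊆ A ∪ B := by
    intro z hz
    obtain ⟨j, hj⟩ := mem_iUnion.1 (hcover hz)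
    by_cases hjC : j ∈ C
    · exact Or.inl (mem_biUnion hjC hj)
    · exact Or.inr (mem_biUnion hjC hj)
  have hxA : x ∈ A := by
    obtain ⟨j, hj⟩ := mem_iUnion.1 (hcover hxK)
    refine mem_biUnion ?_ hj
    refine ⟨{j}, ?_, Finset.mem_singleton_self j⟩
    intro z hz
    obtain ⟨i, hi, hzi⟩ := hz
    rw [Finset.mem_singleton] at hi
    subst hi
    rw [Finset.sum_singleton]
    exact hstep i x hj z hzi
  -- the two open pieces do not meet inside K
  have hdisj : (K ∩ (A ∩ B)) = ∅ := by
    by_contra hne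
    obtain ⟨y, hyK', hyA, hyB⟩ := nonempty_iff_ne_empty.2 hne
    obtain ⟨j, hjC, hyj⟩ := mem_iUnion₂.1 hyA
    obtain ⟨m, hmC, hym⟩ := mem_iUnion₂.1 hyB
    obtain ⟨s, hs, hjs⟩ := hjC
    -- m ∉ s, since otherwise m ∈ C
    have hms : m ∉ s := fun hms => hmC ⟨s, hs, hms⟩
    apply hmC
    refine ⟨insert m s, ?_, Finset.mem_insert_self m s⟩
    intro z hz
    rw [Finset.sum_insert hms]
    obtain ⟨i, hi, hzi⟩ := hz
    rcases Finset.mem_insert.1 hi with hi | hi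
    · subst hi
      have h1 : |f x - f y| ≤ ∑ i ∈ s, osc i := hs y ⟨j, hjs, hyj⟩
      have h2 : |f y - f z| ≤ osc i := hstep i y hym z hzi
      calc |f x - f z| ≤ |f x - f y| + |f y - f z| := abs_sub_le _ _ _
        _ ≤ osc i + ∑ i ∈ s, osc i := by linarith
    · have h1 : |f x - f z| ≤ ∑ i ∈ s, osc i := hs z ⟨i, hi, hzi⟩
      have := hosc_nonneg m
      linarith
  -- by connectedness, K ∩ B is empty
  have hKB : K ∩ B = ∅ := by
    by_contra hne
    have := hKconn A B hAopen hBopen hKAB ⟨x, hxK, hxA⟩ (nonempty_iff_ne_empty.2 hne)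
    rw [hdisj] at this
    exact not_nonempty_empty this
  -- hence γ 1 ∈ A, and we conclude
  have hy1A : γ 1 ∈ A := by
    rcases hKAB hyK with h | h
    · exact h
    · exact absurd (mem_inter hyK h) (by rw [hKB]; exact fun h => h)
  obtain ⟨j, hjC, hyj⟩ := mem_iUnion₂.1 hy1A
  obtain ⟨s, hs, hjs⟩ := hjC
  calc |f x - f (γ 1)| ≤ ∑ i ∈ s, osc i := hs (γ 1) ⟨j, hjs, hyj⟩
    _ ≤ ∑ i : Fin k, osc i :=
      Finset.sum_le_sum_of_subset_of_nonneg (Finset.subset_univ s)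
        (fun i _ _ => hosc_nonneg i)
end

section
/- Let n > 0 be a real number, r > 0, let y : [0,r] → ℝ be twice differentiable with y(t) > 0 for all t ∈ [0,r], and let F : [0,r] → ℝ be differentiable. Assume that the function t ↦ n y′(t)/y(t) is differentiable and satisfies (d/dt)(n y′(t)/y(t)) ≤ −(1/n) (n y′(t)/y(t) + F′(t))² for every t ∈ [0,r]. Then n y″(t) ≤ −2 F′(t) y′(t) for every t ∈ [0,r]. -/
open Set

/-- Riccati-type step in the Jacobian estimate: if `y > 0` is twice differentiable,
`F` is differentiable, and the function `t ↦ n y′(t)/y(t)` is differentiable with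
`(n y′/y)′ ≤ −(1/n)(n y′/y + F′)²` on `[0,r]`, then `n y″ ≤ −2 F′ y′` on `[0,r]`. -/
theorem riccati_to_second_order
    (n r : ℝ) (hn : 0 < n) (hr : 0 < r)
    (y y' y'' F F' : ℝ → ℝ)
    (hy : ∀ t ∈ Icc 0 r, HasDerivAt y (y' t) t)
    (hy' : ∀ t ∈ Icc 0 r, HasDerivAt y' (y'' t) t)
    (hypos : ∀ t ∈ Icc 0 r, 0 < y t)
    (hF : ∀ t ∈ Icc 0 r, HasDerivAt F (F' t) t)
    (hdiff : ∀ t ∈ Icc 0 r, DifferentiableAt ℝ (fun s => n * y' s / y s) t)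
    (hineq : ∀ t ∈ Icc 0 r,
      deriv (fun s => n * y' s / y s) t ≤
        -(1 / n) * (n * y' t / y t + F' t) ^ 2) :
    ∀ t ∈ Icc 0 r, n * y'' t ≤ -2 * F' t * y' t := by
  intro t ht
  have hyt := hypos t ht
  have hD : HasDerivAt (fun s => n * y' s / y s)
      ((n * y'' t * y t - n * y' t * y' t) / (y t) ^ 2) t :=
    ((hy' t ht).const_mul n).div (hy t ht) hyt.ne'
  have hderiv := hD.deriv
  have h := hineq t ht
  rw [hderiv] at h
  have h2 : (n * y'' t * y t - n * y' t * y' t) / (y t) ^ 2 ≤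
      -(1 / n) * (n * y' t / y t + F' t) ^ 2 := h
  have hy2 : (0:ℝ) < (y t)^2 := by positivity
  rw [div_le_iff₀ hy2] at h2
  have hexp : -(1 / n) * (n * y' t / y t + F' t) ^ 2 * (y t) ^ 2
      = -(1 / n) * (n * y' t + F' t * y t) ^ 2 := by
    field_simp
  rw [hexp] at h2
  have hsq : 0 ≤ (F' t * y t)^2 / n := by positivity
  have key : n * y'' t * y t ≤ -2 * F' t * y' t * y t := by
    have hexpand : -(1 / n) * (n * y' t + F' t * y t) ^ 2
        = -(n * y' t * y' t) - 2 * F' t * y' t * y t - (F' t * y t)^2 / n := by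
      field_simp
      ring
    nlinarith [hsq]
  calc n * y'' t = n * y'' t * y t / y t := by field_simp
    _ ≤ -2 * F' t * y' t * y t / y t := by gcongr
    _ = -2 * F' t * y' t := by field_simp
end

section
/- Let (X,d) be a metric space, μ a Borel measure on X, o ∈ X a fixed point, n ≥ 1 an integer, and D ≥ 1, ξ ≥ 1, β > 0 constants. Assume: (i) μ(B_R(x)) ≤ D (R/r)ⁿ μ(B_r(x)) for every x ∈ X and all 0 < r ≤ R ≤ d(x,o), and also for x = o and all 0 < r ≤ R; (ii) μ(B_r(o)) ≤ ξ μ(B_{r/2}(x)) for every r > 0 and every x ∈ X with d(x,o) = r; (iii) limsup_{r→∞} μ(B_r(o))/rⁿ ≥ β. Then μ(B_r(y)) ≥ (2ⁿ D² ξ)^{−1} β rⁿ for every y ∈ X and every r > 0. -/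
open Metric MeasureTheory Set Filter

private lemma aux_div {a c : ℝ} (hc : 0 < c) {m : ENNReal}
    (h : ENNReal.ofReal a ≤ ENNReal.ofReal c * m) : ENNReal.ofReal (a / c) ≤ m := by
  rw [ENNReal.ofReal_div_of_pos hc,
    ENNReal.div_le_iff (by simp [hc]) ENNReal.ofReal_ne_top]
  rwa [mul_comm] at h

/-- Lower-bound half of Lemma 4.2 (Ahlfors regularity): relative volume comparison
(i), the Li–Tam condition (VC) (ii), and positive asymptotic volume ratio (iii)
imply the uniform lower volume bound `μ(B_r(y)) ≥ (2ⁿ D² ξ)⁻¹ β rⁿ`. -/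
theorem ahlfors_lower_bound
    {X : Type*} [MetricSpace X] [MeasurableSpace X] [BorelSpace X] (μ : Measure X)
    (o : X) (n : ℕ) (hn : 1 ≤ n) (D ξ β : ℝ) (hD : 1 ≤ D) (hξ : 1 ≤ ξ) (hβ : 0 < β)
    (hcomp : ∀ (x : X) (r R : ℝ), 0 < r → r ≤ R → R ≤ dist x o →
      μ (ball x R) ≤ ENNReal.ofReal (D * (R / r) ^ n) * μ (ball x r))
    (hcompo : ∀ r R : ℝ, 0 < r → r ≤ R →
      μ (ball o R) ≤ ENNReal.ofReal (D * (R / r) ^ n) * μ (ball o r))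
    (hVC : ∀ r : ℝ, 0 < r → ∀ x : X, dist x o = r →
      μ (ball o r) ≤ ENNReal.ofReal ξ * μ (ball x (r / 2)))
    (hAVR : ENNReal.ofReal β ≤
      limsup (fun r : ℝ => μ (ball o r) / ENNReal.ofReal (r ^ n)) atTop) :
    ∀ (y : X) (r : ℝ), 0 < r →
      ENNReal.ofReal ((2 ^ n * D ^ 2 * ξ)⁻¹ * β * r ^ n) ≤ μ (ball y r) := by
  have hD0 : (0:ℝ) < D := lt_of_lt_of_le one_pos hD
  have hξ0 : (0:ℝ) < ξ := lt_of_lt_of_le one_pos hξ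
  have h2n1 : (1:ℝ) ≤ 2 ^ n := by
    calc (1:ℝ) = 1 ^ n := (one_pow n).symm
      _ ≤ 2 ^ n := pow_le_pow_left₀ zero_le_one one_le_two n
  -- Step A: lower bound for balls centered at o
  have key : ∀ R : ℝ, 0 < R → ENNReal.ofReal (β / D * R ^ n) ≤ μ (ball o R) := by
    intro R hR
    have hRn : (0:ℝ) < R ^ n := pow_pos hR n
    have hlim : limsup (fun r : ℝ => μ (ball o r) / ENNReal.ofReal (r ^ n)) atTop
        ≤ ENNReal.ofReal (D / R ^ n) * μ (ball o R) := by
      refine limsup_le_of_le (by isBoundedDefault) ?_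
      filter_upwards [eventually_ge_atTop R, eventually_gt_atTop (0:ℝ)] with t htR ht0
      have h1 : μ (ball o t) / ENNReal.ofReal (t ^ n)
          ≤ ENNReal.ofReal (D * (t / R) ^ n) * μ (ball o R) / ENNReal.ofReal (t ^ n) :=
        ENNReal.div_le_div_right (hcompo R t hR htR) _
      refine h1.trans_eq ?_
      rw [div_eq_mul_inv, mul_right_comm, ← div_eq_mul_inv,
        ← ENNReal.ofReal_div_of_pos (pow_pos ht0 n)]
      congr 2
      rw [div_pow]
      field_simp
    have h2 : ENNReal.ofReal β ≤ ENNReal.ofReal (D / R ^ n) * μ (ball o R) :=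
      hAVR.trans hlim
    have h3 := aux_div (div_pos hD0 hRn) h2
    refine le_trans (le_of_eq ?_) h3
    congr 1
    field_simp
  intro y r hr
  set s : ℝ := dist y o with hs
  have hs0 : 0 ≤ s := dist_nonneg
  by_cases hcase : s ≤ r / 2
  · -- the ball around y contains a large ball around o
    have hsub : ball o (r / 2) ⊆ ball y r := by
      intro z hz
      simp only [mem_ball] at hz ⊢
      have hoy : dist z y ≤ dist z o + dist o y := dist_triangle z o y
      have : dist o y = s := by rw [dist_comm]
      linarith
    refine le_trans ?_ ((key (r / 2) (by linarith)).trans (measure_mono hsub))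
    apply ENNReal.ofReal_le_ofReal
    have e1 : (2 ^ n * D ^ 2 * ξ)⁻¹ * β * r ^ n = β * r ^ n / (2 ^ n * D ^ 2 * ξ) := by
      ring
    have e2 : β / D * (r / 2) ^ n = β * r ^ n / (D * 2 ^ n) := by
      rw [div_pow]; ring
    rw [e1, e2, div_le_div_iff₀ (by positivity) (by positivity)]
    have hP : (0:ℝ) ≤ β * r ^ n * 2 ^ n := by positivity
    nlinarith [mul_le_mul_of_nonneg_left
      (show D ≤ D ^ 2 * ξ by nlinarith) hP]
  · push_neg at hcase
    have hspos : 0 < s := lt_of_le_of_lt (by linarith) hcase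
    have hB : ENNReal.ofReal (β / D * s ^ n / ξ) ≤ μ (ball y (s / 2)) :=
      aux_div hξ0 ((key s hspos).trans (hVC s hspos y hs.symm))
    have hsn : (0:ℝ) < s ^ n := pow_pos hspos n
    have hrn : r ^ n ≤ 2 ^ n * s ^ n := by
      calc r ^ n ≤ (2 * s) ^ n := pow_le_pow_left₀ hr.le (by linarith) n
        _ = 2 ^ n * s ^ n := mul_pow 2 s n
    by_cases hc2 : s / 2 ≤ r
    · refine le_trans ?_ (hB.trans (measure_mono (ball_subset_ball hc2)))
      apply ENNReal.ofReal_le_ofReal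
      have e1 : (2 ^ n * D ^ 2 * ξ)⁻¹ * β * r ^ n = β * r ^ n / (2 ^ n * D ^ 2 * ξ) := by
        ring
      have e2 : β / D * s ^ n / ξ = β * s ^ n / (D * ξ) := by ring
      rw [e1, e2, div_le_div_iff₀ (by positivity) (by positivity)]
      have h1 : β * r ^ n * (D * ξ) ≤ β * (2 ^ n * s ^ n) * (D * ξ) := by
        have := mul_le_mul_of_nonneg_left hrn (le_of_lt hβ)
        nlinarith [mul_pos hD0 hξ0]
      have h2 : β * (2 ^ n * s ^ n) * (D * ξ) ≤ β * s ^ n * (2 ^ n * D ^ 2 * ξ) := by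
        nlinarith [mul_le_mul_of_nonneg_left (show D ≤ D ^ 2 by nlinarith)
          (show (0:ℝ) ≤ β * s ^ n * 2 ^ n * ξ by positivity)]
      linarith
    · push_neg at hc2
      have hcmp := hcomp y r (s / 2) hr hc2.le (by rw [← hs]; linarith)
      have hfin : ENNReal.ofReal (β / D * s ^ n / ξ / (D * (s / 2 / r) ^ n))
          ≤ μ (ball y r) := aux_div (by positivity) (hB.trans hcmp)
      refine le_trans ?_ hfin
      apply ENNReal.ofReal_le_ofReal
      have key2 : β / D * s ^ n / ξ / (D * (s / 2 / r) ^ n)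
          = 2 ^ n * β * r ^ n / (D ^ 2 * ξ) := by
        rw [div_pow, div_pow]
        field_simp
      rw [key2]
      have e1 : (2 ^ n * D ^ 2 * ξ)⁻¹ * β * r ^ n = β * r ^ n / (2 ^ n * D ^ 2 * ξ) := by
        ring
      rw [e1, div_le_div_iff₀ (by positivity) (by positivity)]
      have h4 : (1:ℝ) ≤ 2 ^ n * 2 ^ n := by nlinarith
      nlinarith [mul_le_mul_of_nonneg_left h4
        (show (0:ℝ) ≤ β * r ^ n * (D ^ 2 * ξ) by positivity)]
end

section
/- Let (X,d) be a metric space, μ a Borel measure on X, o ∈ X a fixed point, n ≥ 1 an integer, and D ≥ 1, V₁ > 0 constants. Assume: (i) μ(B_R(x)) ≤ D (R/r)ⁿ μ(B_r(x)) for every x ∈ X and all 0 < r ≤ R ≤ d(x,o), and also for x = o and all 0 < r ≤ R; (ii) limsup_{s→0⁺} μ(B_s(x))/sⁿ ≤ V₁ for every x ∈ X. Then μ(B_r(y)) ≤ 2ⁿ D V₁ rⁿ for every y ∈ X and every r > 0. -/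
open Metric MeasureTheory Set Filter

lemma ahlfors_aux {X : Type*} [MetricSpace X] [MeasurableSpace X] (μ : Measure X)
    (x : X) (n : ℕ) {V₁ C : ℝ} (hC : 0 < C) (hV : 0 ≤ V₁)
    (hdensity : limsup (fun s : ℝ => μ (ball x s) / ENNReal.ofReal (s ^ n))
      (nhdsWithin 0 (Ioi 0)) ≤ ENNReal.ofReal V₁)
    (A : Set X) {ε : ℝ} (hε : 0 < ε)
    (h : ∀ s : ℝ, 0 < s → s ≤ ε →
      μ A ≤ ENNReal.ofReal (C / s ^ n) * μ (ball x s)) :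
    μ A ≤ ENNReal.ofReal (C * V₁) := by
  have hCne : ENNReal.ofReal C ≠ 0 := by
    simp [ENNReal.ofReal_eq_zero, not_le, hC]
  have key : ∀ s : ℝ, 0 < s → s ≤ ε →
      μ A / ENNReal.ofReal C ≤ μ (ball x s) / ENNReal.ofReal (s ^ n) := by
    intro s hs hsε
    have hsn : (0:ℝ) < s ^ n := by positivity
    rw [ENNReal.div_le_iff hCne ENNReal.ofReal_ne_top]
    calc μ A ≤ ENNReal.ofReal (C / s ^ n) * μ (ball x s) := h s hs hsε
      _ = μ (ball x s) / ENNReal.ofReal (s ^ n) * ENNReal.ofReal C := by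
          rw [ENNReal.ofReal_div_of_pos hsn, div_eq_mul_inv, div_eq_mul_inv]
          ring
  have hfreq : ∃ᶠ s in nhdsWithin (0:ℝ) (Ioi 0),
      μ A / ENNReal.ofReal C ≤ μ (ball x s) / ENNReal.ofReal (s ^ n) := by
    apply Eventually.frequently
    filter_upwards [Ioc_mem_nhdsGT hε] with s hs
    exact key s hs.1 hs.2
  have hle : μ A / ENNReal.ofReal C ≤ ENNReal.ofReal V₁ :=
    le_trans (le_limsup_of_frequently_le' hfreq) hdensity
  rw [ENNReal.div_le_iff hCne ENNReal.ofReal_ne_top] at hle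
  calc μ A ≤ ENNReal.ofReal V₁ * ENNReal.ofReal C := hle
    _ = ENNReal.ofReal (C * V₁) := by
        rw [← ENNReal.ofReal_mul hV, mul_comm]

/-- Upper-bound half of Lemma 4.2 (Ahlfors regularity): relative volume comparison
(i) and the infinitesimal density bound (ii) imply the uniform upper volume bound
`μ(B_r(y)) ≤ 2ⁿ D V₁ rⁿ`. -/
theorem ahlfors_upper_bound
    {X : Type*} [MetricSpace X] [MeasurableSpace X] [BorelSpace X] (μ : Measure X)
    (o : X) (n : ℕ) (hn : 1 ≤ n) (D V₁ : ℝ) (hD : 1 ≤ D) (hV₁ : 0 < V₁)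
    (hcomp : ∀ (x : X) (r R : ℝ), 0 < r → r ≤ R → R ≤ dist x o →
      μ (ball x R) ≤ ENNReal.ofReal (D * (R / r) ^ n) * μ (ball x r))
    (hcompo : ∀ r R : ℝ, 0 < r → r ≤ R →
      μ (ball o R) ≤ ENNReal.ofReal (D * (R / r) ^ n) * μ (ball o r))
    (hdensity : ∀ x : X,
      limsup (fun s : ℝ => μ (ball x s) / ENNReal.ofReal (s ^ n))
        (nhdsWithin 0 (Ioi 0)) ≤ ENNReal.ofReal V₁) :
    ∀ (y : X) (r : ℝ), 0 < r →
      μ (ball y r) ≤ ENNReal.ofReal (2 ^ n * D * V₁ * r ^ n) := by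
  intro y r hr
  have h2n : (1:ℝ) ≤ 2 ^ n := one_le_pow₀ one_le_two
  rcases le_or_gt r (dist y o) with hcase | hcase
  · have hC : (0:ℝ) < D * r ^ n := by positivity
    have h := ahlfors_aux μ y n hC hV₁.le (hdensity y) (ball y r) hr
      (fun s hs hsr => by
        have heq : D * r ^ n / s ^ n = D * (r / s) ^ n := by rw [div_pow]; ring
        rw [heq]
        exact hcomp y s r hs hsr hcase)
    refine h.trans (ENNReal.ofReal_le_ofReal ?_)
    have hrn : (0:ℝ) < r ^ n := by positivity
    nlinarith [mul_le_mul_of_nonneg_right h2n (le_of_lt (by positivity : (0:ℝ) < D * V₁ * r ^ n))]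
  · have h2r : (0:ℝ) < 2 * r := by linarith
    have hC : (0:ℝ) < D * (2 * r) ^ n := by positivity
    have hsub : ball y r ⊆ ball o (2 * r) := fun z hz => by
      rw [mem_ball] at *
      calc dist z o ≤ dist z y + dist y o := dist_triangle z y o
        _ < r + r := by linarith [hz]
        _ = 2 * r := by ring
    have h := ahlfors_aux μ o n hC hV₁.le (hdensity o) (ball o (2 * r)) h2r
      (fun s hs hsr => by
        have heq : D * (2 * r) ^ n / s ^ n = D * ((2 * r) / s) ^ n := by
          rw [div_pow]; ring
        rw [heq]
        exact hcompo s (2 * r) hs hsr)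
    calc μ (ball y r) ≤ μ (ball o (2 * r)) := measure_mono hsub
      _ ≤ ENNReal.ofReal (D * (2 * r) ^ n * V₁) := h
      _ = ENNReal.ofReal (2 ^ n * D * V₁ * r ^ n) := by
          congr 1; rw [mul_pow]; ring
end

section
/- Let (X,d) be a metric space, μ a Borel measure on X, p ∈ X, n ≥ 3 an integer, α > 3n a real number, and v₀ > 0 with μ(B_r(p)) ≤ v₀ rⁿ for every r > 0. Then ∫_X max{1, d(p,x)^{3n−2}} · d(p,x)^{2−n} · (1 + d(p,x)^{α})^{−1} dμ(x) ≤ C(n,α) v₀, where one may take C(n,α) = n/2 + (α−2n)/(α−3n). -/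
open Metric MeasureTheory Set

lemma key_real {N α r : ℝ} (hN : 3 ≤ N) (hα : 3 * N < α) (hr : 0 < r) :
    max 1 (r ^ (3 * N - 2)) * r ^ (2 - N) * (1 + r ^ α)⁻¹ ≤
      min (r ^ (2 - N)) (r ^ (2 * N - α)) := by
  rcases le_or_gt r 1 with h1 | h1
  · have hmax : max 1 (r ^ (3 * N - 2)) = 1 :=
      max_eq_left (Real.rpow_le_one hr.le h1 (by linarith))
    have hinv : (1 + r ^ α)⁻¹ ≤ 1 := by
      apply inv_le_one_of_one_le₀
      have := Real.rpow_nonneg hr.le α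
      linarith
    have hle1 : max 1 (r ^ (3 * N - 2)) * r ^ (2 - N) * (1 + r ^ α)⁻¹ ≤ r ^ (2 - N) := by
      rw [hmax, one_mul]
      calc r ^ (2 - N) * (1 + r ^ α)⁻¹ ≤ r ^ (2 - N) * 1 := by gcongr
        _ = r ^ (2 - N) := mul_one _
    refine le_min hle1 (hle1.trans ?_)
    exact Real.rpow_le_rpow_of_exponent_ge hr h1 (by linarith)
  · have hmax : max 1 (r ^ (3 * N - 2)) = r ^ (3 * N - 2) :=
      max_eq_right (Real.one_le_rpow h1.le (by linarith))
    have hinv : (1 + r ^ α)⁻¹ ≤ r ^ (-α) := by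
      rw [Real.rpow_neg hr.le]
      apply inv_anti₀ (Real.rpow_pos_of_pos hr α)
      linarith
    have hle2 : max 1 (r ^ (3 * N - 2)) * r ^ (2 - N) * (1 + r ^ α)⁻¹ ≤ r ^ (2 * N - α) := by
      rw [hmax]
      calc r ^ (3 * N - 2) * r ^ (2 - N) * (1 + r ^ α)⁻¹
          ≤ r ^ (3 * N - 2) * r ^ (2 - N) * r ^ (-α) := by gcongr
        _ = r ^ (2 * N - α) := by
            rw [← Real.rpow_add hr, ← Real.rpow_add hr]; ring_nf
    refine le_min (hle2.trans ?_) hle2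
    exact Real.rpow_le_rpow_of_exponent_le h1.le (by linarith)

lemma rad_lt {e t r : ℝ} (he : 0 < e) (ht : 0 < t) (hr : 0 ≤ r)
    (h : t < r ^ (-e)) : r < t ^ (-(1 / e)) := by
  rcases eq_or_lt_of_le hr with h0 | h0
  · rw [← h0]
    exact Real.rpow_pos_of_pos ht _
  · have key : (r ^ (-e)) ^ (-(1 / e)) < t ^ (-(1 / e)) :=
      Real.rpow_lt_rpow_of_neg ht h (by rw [neg_neg_iff_pos] at *; positivity)
    calc r = (r ^ (-e)) ^ (-(1 / e)) := by
            rw [← Real.rpow_mul h0.le]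
            rw [show -e * -(1 / e) = 1 by field_simp, Real.rpow_one]
      _ < t ^ (-(1 / e)) := key

lemma intA {v₀ c : ℝ} (hv : 0 ≤ v₀) (hc : -1 < c) :
    ∫⁻ t in Ioc (0:ℝ) 1, ENNReal.ofReal (v₀ * t ^ c) =
      ENNReal.ofReal (v₀ * (1 / (c + 1))) := by
  have hint : IntegrableOn (fun t : ℝ => v₀ * t ^ c) (Ioc 0 1) :=
    ((intervalIntegral.intervalIntegrable_rpow' hc).1).const_mul v₀
  rw [← ofReal_integral_eq_lintegral_ofReal hint]
  · congr 1
    rw [MeasureTheory.integral_const_mul, ← intervalIntegral.integral_of_le zero_le_one,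
      integral_rpow (Or.inl hc)]
    rw [Real.one_rpow, Real.zero_rpow (by linarith)]
    ring
  · filter_upwards [ae_restrict_mem measurableSet_Ioc] with t ht
    have : 0 ≤ t ^ c := Real.rpow_nonneg ht.1.le c
    positivity

lemma intB {v₀ c : ℝ} (hv : 0 ≤ v₀) (hc : c < -1) :
    ∫⁻ t in Ioi (1:ℝ), ENNReal.ofReal (v₀ * t ^ c) =
      ENNReal.ofReal (v₀ * (-1 / (c + 1))) := by
  have hint : IntegrableOn (fun t : ℝ => v₀ * t ^ c) (Ioi 1) :=
    (integrableOn_Ioi_rpow_of_lt hc one_pos).const_mul v₀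
  rw [← ofReal_integral_eq_lintegral_ofReal hint]
  · congr 1
    rw [MeasureTheory.integral_const_mul, integral_Ioi_rpow_of_lt hc one_pos, Real.one_rpow]
  · filter_upwards [ae_restrict_mem measurableSet_Ioi] with t ht
    have h0 : (0:ℝ) < t := lt_trans one_pos ht
    have : 0 ≤ t ^ c := Real.rpow_nonneg h0.le c
    positivity

/-- Tail integral estimate for Theorem 1.2(a): under the volume growth bound
`μ(B_r(p)) ≤ v₀ rⁿ` and for `α > 3n`,
`∫_X max{1, d(p,x)^{3n−2}} d(p,x)^{2−n} (1 + d(p,x)^α)⁻¹ dμ ≤ (n/2 + (α−2n)/(α−3n)) v₀`.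
The factor `d(p,x)^{2−n}` is the `ℝ≥0∞`-valued power, equal to `+∞` at `x = p`. -/
theorem kato_tail_integral_estimate
    {X : Type*} [MetricSpace X] [MeasurableSpace X] [BorelSpace X] (μ : Measure X)
    (p : X) (n : ℕ) (hn : 3 ≤ n) (α : ℝ) (hα : 3 * n < α)
    (v₀ : ℝ) (hv₀ : 0 < v₀)
    (hvol : ∀ r : ℝ, 0 < r → μ (ball p r) ≤ ENNReal.ofReal (v₀ * r ^ n)) :
    ∫⁻ x, ENNReal.ofReal (max 1 (dist p x ^ (3 * (n : ℝ) - 2))) *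
        ENNReal.ofReal (dist p x) ^ ((2 : ℝ) - n) *
        ENNReal.ofReal ((1 + dist p x ^ α)⁻¹) ∂μ ≤
      ENNReal.ofReal ((n / 2 + (α - 2 * n) / (α - 3 * n)) * v₀) := by
  have hN3 : (3:ℝ) ≤ (n:ℝ) := by exact_mod_cast hn
  set N : ℝ := (n : ℝ) with hNdef
  have hb : 0 < α - 2 * N := by linarith
  have ha2 : 0 < N - 2 := by linarith
  have hbN : N < α - 2 * N := by linarith
  have hNne : N ≠ 0 := by linarith
  -- the point p is null
  have hmup : μ {p} = 0 := by
    refine le_antisymm ?_ zero_le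
    refine ENNReal.le_of_forall_pos_le_add fun ε hε _ => ?_
    have hεr : (0:ℝ) < (ε:ℝ) := hε
    set r := ((ε : ℝ) / v₀) ^ (1 / N) with hrdef
    have hq : (0:ℝ) < (ε:ℝ) / v₀ := div_pos hεr hv₀
    have hrpos : 0 < r := Real.rpow_pos_of_pos hq _
    have h1 : μ {p} ≤ μ (ball p r) :=
      measure_mono (singleton_subset_iff.mpr (mem_ball_self hrpos))
    have h3 : v₀ * r ^ n = (ε:ℝ) := by
      rw [hrdef, ← Real.rpow_natCast (((ε:ℝ) / v₀) ^ (1 / N)) n, ← Real.rpow_mul hq.le,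
        one_div_mul_cancel hNne, Real.rpow_one]
      field_simp
    calc μ {p} ≤ μ (ball p r) := h1
      _ ≤ ENNReal.ofReal (v₀ * r ^ n) := hvol r hrpos
      _ = (ε : ENNReal) := by rw [h3]; exact ENNReal.ofReal_coe_nnreal
      _ ≤ 0 + ε := by rw [zero_add]
  -- the dominating function
  set g : X → ℝ := fun x => min (dist p x ^ (2 - N)) (dist p x ^ (2 * N - α)) with hgdef
  have g_nn : 0 ≤ᵐ[μ] g :=
    Filter.Eventually.of_forall fun x => le_min (Real.rpow_nonneg dist_nonneg _)
      (Real.rpow_nonneg dist_nonneg _)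
  have g_mble : Measurable g := by
    rw [hgdef]; fun_prop
  -- a.e. pointwise bound
  have hne : ∀ᵐ x ∂μ, p ≠ x := by
    rw [ae_iff]
    have : {x : X | ¬ p ≠ x} = {p} := by ext x; simp [eq_comm]
    rw [this]; exact hmup
  have step1 : ∀ᵐ x ∂μ,
      ENNReal.ofReal (max 1 (dist p x ^ (3 * N - 2))) *
        ENNReal.ofReal (dist p x) ^ ((2 : ℝ) - N) *
        ENNReal.ofReal ((1 + dist p x ^ α)⁻¹) ≤ ENNReal.ofReal (g x) := by
    filter_upwards [hne] with x hx
    have hr : 0 < dist p x := dist_pos.mpr hx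
    rw [ENNReal.ofReal_rpow_of_pos hr,
      ← ENNReal.ofReal_mul (le_trans zero_le_one (le_max_left _ _)),
      ← ENNReal.ofReal_mul
        (mul_nonneg (le_trans zero_le_one (le_max_left _ _)) (Real.rpow_nonneg hr.le _))]
    exact ENNReal.ofReal_le_ofReal (key_real hN3 hα hr)
  -- exponents for the layer-cake pieces
  set cA : ℝ := -(N / (α - 2 * N)) with hcAdef
  set cB : ℝ := -(N / (N - 2)) with hcBdef
  have hcA : -1 < cA := by
    rw [hcAdef, neg_lt, neg_neg]
    exact (div_lt_one hb).mpr hbN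
  have hcB : cB < -1 := by
    rw [hcBdef, neg_lt_neg_iff]
    exact (one_lt_div ha2).mpr (by linarith)
  -- superlevel set bounds
  have boundA : ∀ t ∈ Ioc (0:ℝ) 1, μ {x | t < g x} ≤ ENNReal.ofReal (v₀ * t ^ cA) := by
    intro t ht
    have ht0 : 0 < t := ht.1
    have hsub : {x | t < g x} ⊆ ball p (t ^ (-(1 / (α - 2 * N)))) := by
      intro x hx
      have h2 : t < dist p x ^ (-(α - 2 * N)) := by
        have := lt_of_lt_of_le (show t < g x from hx) (min_le_right _ _)
        rwa [show 2 * N - α = -(α - 2 * N) from by ring] at this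
      exact mem_ball'.mpr (rad_lt hb ht0 dist_nonneg h2)
    have hρ : (0:ℝ) < t ^ (-(1 / (α - 2 * N))) := Real.rpow_pos_of_pos ht0 _
    calc μ {x | t < g x} ≤ μ (ball p (t ^ (-(1 / (α - 2 * N))))) := measure_mono hsub
      _ ≤ ENNReal.ofReal (v₀ * (t ^ (-(1 / (α - 2 * N)))) ^ n) := hvol _ hρ
      _ = ENNReal.ofReal (v₀ * t ^ cA) := by
          congr 2
          rw [← Real.rpow_natCast (t ^ (-(1 / (α - 2 * N)))) n, ← Real.rpow_mul ht0.le]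
          congr 1
          rw [hcAdef]; ring
  have boundB : ∀ t ∈ Ioi (1:ℝ), μ {x | t < g x} ≤ ENNReal.ofReal (v₀ * t ^ cB) := by
    intro t ht
    have ht0 : (0:ℝ) < t := lt_trans one_pos ht
    have hsub : {x | t < g x} ⊆ ball p (t ^ (-(1 / (N - 2)))) := by
      intro x hx
      have h2 : t < dist p x ^ (-(N - 2)) := by
        have := lt_of_lt_of_le (show t < g x from hx) (min_le_left _ _)
        rwa [show 2 - N = -(N - 2) from by ring] at this
      exact mem_ball'.mpr (rad_lt ha2 ht0 dist_nonneg h2)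
    have hρ : (0:ℝ) < t ^ (-(1 / (N - 2))) := Real.rpow_pos_of_pos ht0 _
    calc μ {x | t < g x} ≤ μ (ball p (t ^ (-(1 / (N - 2))))) := measure_mono hsub
      _ ≤ ENNReal.ofReal (v₀ * (t ^ (-(1 / (N - 2)))) ^ n) := hvol _ hρ
      _ = ENNReal.ofReal (v₀ * t ^ cB) := by
          congr 2
          rw [← Real.rpow_natCast (t ^ (-(1 / (N - 2)))) n, ← Real.rpow_mul ht0.le]
          congr 1
          rw [hcBdef]; ring
  -- put everything together
  calc ∫⁻ x, ENNReal.ofReal (max 1 (dist p x ^ (3 * N - 2))) *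
        ENNReal.ofReal (dist p x) ^ ((2 : ℝ) - N) *
        ENNReal.ofReal ((1 + dist p x ^ α)⁻¹) ∂μ
      ≤ ∫⁻ x, ENNReal.ofReal (g x) ∂μ := lintegral_mono_ae step1
    _ = ∫⁻ t in Ioi (0:ℝ), μ {x | t < g x} :=
        lintegral_eq_lintegral_meas_lt μ g_nn g_mble.aemeasurable
    _ = (∫⁻ t in Ioc (0:ℝ) 1, μ {x | t < g x}) + ∫⁻ t in Ioi (1:ℝ), μ {x | t < g x} := by
        rw [← Ioc_union_Ioi_eq_Ioi (zero_le_one : (0:ℝ) ≤ 1),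
          lintegral_union measurableSet_Ioi (Ioc_disjoint_Ioi le_rfl)]
    _ ≤ (∫⁻ t in Ioc (0:ℝ) 1, ENNReal.ofReal (v₀ * t ^ cA)) +
        ∫⁻ t in Ioi (1:ℝ), ENNReal.ofReal (v₀ * t ^ cB) := by
        exact add_le_add (setLIntegral_mono (by fun_prop) boundA)
          (setLIntegral_mono (by fun_prop) boundB)
    _ = ENNReal.ofReal (v₀ * (1 / (cA + 1))) + ENNReal.ofReal (v₀ * (-1 / (cB + 1))) := by
        rw [intA hv₀.le hcA, intB hv₀.le hcB]
    _ ≤ ENNReal.ofReal ((N / 2 + (α - 2 * N) / (α - 3 * N)) * v₀) := by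
        have h3N : 0 < α - 3 * N := by linarith
        have e1 : cA + 1 = (α - 3 * N) / (α - 2 * N) := by
          rw [hcAdef, eq_div_iff hb.ne', add_mul, neg_mul, div_mul_cancel₀ _ hb.ne']; ring
        have e2 : cB + 1 = (-2) / (N - 2) := by
          rw [hcBdef, eq_div_iff ha2.ne', add_mul, neg_mul, div_mul_cancel₀ _ ha2.ne']; ring
        have f1 : (1:ℝ) / (cA + 1) = (α - 2 * N) / (α - 3 * N) := by
          rw [e1, one_div_div]
        have f2 : (-1:ℝ) / (cB + 1) = (N - 2) / 2 := by
          rw [e2, div_div_eq_mul_div]; ring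
        rw [f1, f2, ← ENNReal.ofReal_add
          (mul_nonneg hv₀.le (div_nonneg hb.le h3N.le))
          (mul_nonneg hv₀.le (by linarith))]
        exact ENNReal.ofReal_le_ofReal (by nlinarith [hv₀.le])
end

section
/- Let (X,d) be a metric space, μ a Borel measure on X, p ∈ X, n ≥ 3 an integer, and v₀ > 0 with μ(B_r(p)) ≤ v₀ rⁿ for every r > 0. Let λ : [0,∞) → [0,∞) be nonincreasing with b₀ := ∫₀^∞ s λ(s) ds < ∞. Then ∫_X λ(d(p,x)/2) · d(p,x)^{2−n} dμ(x) ≤ 8(n+1) v₀ b₀. -/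
open Metric MeasureTheory Set
open scoped ENNReal

/-- Inner estimate: `∫_{closedBall p R} d(p,x)^{2-n} dμ ≤ (n/2) v₀ R²`. -/
lemma kato_aux_inner {X : Type*} [MetricSpace X] [MeasurableSpace X] [BorelSpace X]
    (μ : Measure X) (p : X) (n : ℕ) (hn : 3 ≤ n) (v₀ : ℝ) (hv₀ : 0 < v₀)
    (hcb : ∀ R : ℝ, 0 ≤ R → μ (closedBall p R) ≤ ENNReal.ofReal (v₀ * R ^ n))
    (hμp : μ {p} = 0) {R : ℝ} (hR : 0 ≤ R) :
    ∫⁻ x in closedBall p R, ENNReal.ofReal (dist p x) ^ ((2 : ℝ) - n) ∂μ ≤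
      ENNReal.ofReal (((n : ℝ) / 2) * v₀ * R ^ 2) := by
  rcases hR.eq_or_lt with h0 | hR
  · rw [← h0, closedBall_zero, setLIntegral_measure_zero _ _ hμp]
    exact zero_le
  have hn3 : (3 : ℝ) ≤ (n : ℝ) := by exact_mod_cast hn
  set c : ℝ := (2 : ℝ) - n with hc_def
  have hcneg : c < 0 := by linarith
  have hcne : c ≠ 0 := by linarith
  set f : X → ℝ := fun x => dist p x ^ c with hf_def
  have hdist_meas : Measurable fun x : X => dist p x :=
    (Continuous.dist continuous_const continuous_id).measurable
  have hfm : Measurable f := hdist_meas.pow_const c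
  set A := closedBall p R with hA_def
  have hae : ∀ᵐ x ∂μ.restrict A, x ≠ p := by
    rw [ae_iff]
    have h1 : {x : X | ¬x ≠ p} = {p} := by ext x; simp [not_not]
    rw [h1, Measure.restrict_apply (measurableSet_singleton p)]
    exact measure_mono_null inter_subset_left hμp
  have hstep : ∫⁻ x in A, ENNReal.ofReal (dist p x) ^ ((2 : ℝ) - n) ∂μ
      = ∫⁻ x in A, ENNReal.ofReal (f x) ∂μ := by
    refine lintegral_congr_ae ?_
    filter_upwards [hae] with x hx
    have hd : 0 < dist p x := dist_pos.mpr (Ne.symm hx)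
    exact ENNReal.ofReal_rpow_of_pos hd
  rw [hstep, lintegral_eq_lintegral_meas_lt (μ.restrict A)
    (ae_of_all _ fun x => Real.rpow_nonneg dist_nonneg c) hfm.aemeasurable]
  set t₀ : ℝ := R ^ c with ht₀_def
  have ht₀ : 0 < t₀ := Real.rpow_pos_of_pos hR c
  have hsplit : Ioc 0 t₀ ∪ Ioi t₀ = Ioi (0 : ℝ) := Ioc_union_Ioi_eq_Ioi ht₀.le
  have hdisj : Disjoint (Ioc (0 : ℝ) t₀) (Ioi t₀) := by
    rw [disjoint_left]; rintro t ⟨_, h1⟩ h2; exact absurd h2 (not_lt.mpr h1)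
  rw [← hsplit, lintegral_union measurableSet_Ioi hdisj]
  -- part 1 : small `t`
  have hpart1 : ∫⁻ t in Ioc (0 : ℝ) t₀, (μ.restrict A) {x | t < f x}
      ≤ ENNReal.ofReal (v₀ * R ^ 2) := by
    have hb : ∀ t : ℝ, (μ.restrict A) {x | t < f x} ≤ ENNReal.ofReal (v₀ * R ^ n) := by
      intro t
      calc (μ.restrict A) {x | t < f x} ≤ (μ.restrict A) univ :=
            measure_mono (subset_univ _)
        _ = μ A := by rw [Measure.restrict_apply_univ]
        _ ≤ _ := hcb R hR.le
    calc ∫⁻ t in Ioc (0 : ℝ) t₀, (μ.restrict A) {x | t < f x}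
        ≤ ∫⁻ _ in Ioc (0 : ℝ) t₀, ENNReal.ofReal (v₀ * R ^ n) :=
          lintegral_mono fun t => hb t
      _ = ENNReal.ofReal (v₀ * R ^ n) * volume (Ioc (0 : ℝ) t₀) := setLIntegral_const _ _
      _ = ENNReal.ofReal (v₀ * R ^ n) * ENNReal.ofReal t₀ := by
          rw [Real.volume_Ioc, sub_zero]
      _ = ENNReal.ofReal (v₀ * R ^ n * t₀) := by
          rw [← ENNReal.ofReal_mul (by positivity)]
      _ = ENNReal.ofReal (v₀ * R ^ 2) := by
          congr 1
          have h1 : (R : ℝ) ^ n * t₀ = R ^ 2 := by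
            rw [ht₀_def, ← Real.rpow_natCast R n, ← Real.rpow_add hR]
            have h2 : (n : ℝ) + c = 2 := by rw [hc_def]; ring
            rw [h2]
            exact_mod_cast Real.rpow_natCast R 2
          rw [mul_assoc, h1]
  -- part 2 : large `t`
  set e : ℝ := (n : ℝ) / c with he_def
  have he : e < -1 := by
    rw [he_def, div_lt_iff_of_neg hcneg, hc_def]
    linarith
  have hpart2 : ∫⁻ t in Ioi t₀, (μ.restrict A) {x | t < f x}
      ≤ ENNReal.ofReal (v₀ * (R ^ 2 * (((n : ℝ) - 2) / 2))) := by
    have hpt : ∀ t ∈ Ioi t₀, (μ.restrict A) {x | t < f x} ≤ ENNReal.ofReal (v₀ * t ^ e) := by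
      intro t ht
      have htpos : 0 < t := ht₀.trans ht
      have hsub : {x | t < f x} ⊆ ball p (t ^ (1 / c)) := by
        intro x hx
        simp only [mem_setOf_eq, hf_def] at hx
        have hd : 0 < dist p x := by
          rcases (dist_nonneg : 0 ≤ dist p x).eq_or_lt with h | h
          · exfalso
            rw [← h, Real.zero_rpow hcne] at hx
            exact absurd hx (not_lt.mpr htpos.le)
          · exact h
        have hlt : (dist p x ^ c) ^ (1 / c) < t ^ (1 / c) :=
          Real.rpow_lt_rpow_of_neg htpos hx (by
            rw [one_div]; exact inv_neg''.mpr hcneg)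
        rw [← Real.rpow_mul dist_nonneg, mul_one_div_cancel hcne, Real.rpow_one] at hlt
        rw [mem_ball, dist_comm]
        exact hlt
      have hρ : 0 < t ^ (1 / c) := Real.rpow_pos_of_pos htpos _
      calc (μ.restrict A) {x | t < f x} ≤ μ {x | t < f x} := Measure.restrict_le_self _
        _ ≤ μ (closedBall p (t ^ (1 / c))) :=
            measure_mono (hsub.trans ball_subset_closedBall)
        _ ≤ ENNReal.ofReal (v₀ * (t ^ (1 / c)) ^ n) := hcb _ hρ.le
        _ = ENNReal.ofReal (v₀ * t ^ e) := by
            congr 2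
            rw [← Real.rpow_natCast (t ^ (1 / c)) n, ← Real.rpow_mul htpos.le]
            congr 1
            rw [he_def]; ring
    have hmeas : Measurable fun t : ℝ => ENNReal.ofReal (v₀ * t ^ e) :=
      ENNReal.measurable_ofReal.comp ((measurable_id.pow_const e).const_mul v₀)
    have hInt : IntegrableOn (fun t : ℝ => v₀ * t ^ e) (Ioi t₀) :=
      (integrableOn_Ioi_rpow_of_lt he ht₀).const_mul v₀
    have hNN : 0 ≤ᵐ[volume.restrict (Ioi t₀)] fun t : ℝ => v₀ * t ^ e := by
      filter_upwards [ae_restrict_mem measurableSet_Ioi] with t ht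
      have : 0 < t := ht₀.trans ht
      positivity
    calc ∫⁻ t in Ioi t₀, (μ.restrict A) {x | t < f x}
        ≤ ∫⁻ t in Ioi t₀, ENNReal.ofReal (v₀ * t ^ e) := setLIntegral_mono hmeas hpt
      _ = ENNReal.ofReal (∫ t in Ioi t₀, v₀ * t ^ e) :=
          (ofReal_integral_eq_lintegral_ofReal hInt hNN).symm
      _ = ENNReal.ofReal (v₀ * (R ^ 2 * (((n : ℝ) - 2) / 2))) := by
          congr 1
          rw [integral_const_mul, integral_Ioi_rpow_of_lt he ht₀]
          congr 1
          have ht2 : t₀ ^ (e + 1) = R ^ 2 := by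
            rw [ht₀_def, ← Real.rpow_mul hR.le]
            have hce : c * e = (n : ℝ) := by rw [he_def]; field_simp
            have hnc : (n : ℝ) + c = 2 := by rw [hc_def]; ring
            have : c * (e + 1) = 2 := by linear_combination hce + hnc
            rw [this]
            exact_mod_cast Real.rpow_natCast R 2
          have he1 : e + 1 = 2 / c := by
            have hnc : (n : ℝ) + c = 2 := by rw [hc_def]; ring
            rw [he_def]
            field_simp
            linarith
          rw [ht2, he1, hc_def]
          have hne : (2 : ℝ) - n ≠ 0 := by linarith
          field_simp
          ring
  refine le_trans (add_le_add hpart1 hpart2) (le_of_eq ?_)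
  have hn2 : (0 : ℝ) ≤ (n : ℝ) - 2 := by linarith
  rw [← ENNReal.ofReal_add (by positivity) (by positivity)]
  congr 1; ring

/-- Tail estimate for Theorem 1.2(b): if `μ(B_r(p)) ≤ v₀ rⁿ` for all `r > 0`,
`n ≥ 3`, and `λ : [0,∞) → [0,∞)` is nonincreasing with `b₀ = ∫₀^∞ s λ(s) ds < ∞`,
then `∫_X λ(d(p,x)/2) d(p,x)^{2−n} dμ(x) ≤ 8(n+1) v₀ b₀`. The factor
`d(p,x)^{2−n}` is the `ℝ≥0∞`-valued power, equal to `+∞` at `x = p`. -/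
theorem kato_tail_estimate_asymp_nonneg
    {X : Type*} [MetricSpace X] [MeasurableSpace X] [BorelSpace X] (μ : Measure X)
    (p : X) (n : ℕ) (hn : 3 ≤ n) (v₀ : ℝ) (hv₀ : 0 < v₀)
    (hvol : ∀ r : ℝ, 0 < r → μ (ball p r) ≤ ENNReal.ofReal (v₀ * r ^ n))
    (lam : ℝ → ℝ) (hmono : AntitoneOn lam (Ici 0)) (hnonneg : ∀ s ∈ Ici (0 : ℝ), 0 ≤ lam s)
    (hint : IntegrableOn (fun s => s * lam s) (Ioi 0))
    (b₀ : ℝ) (hb₀ : b₀ = ∫ s in Ioi (0 : ℝ), s * lam s) :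
    ∫⁻ x, ENNReal.ofReal (lam (dist p x / 2)) *
        ENNReal.ofReal (dist p x) ^ ((2 : ℝ) - n) ∂μ ≤
      ENNReal.ofReal (8 * (n + 1) * v₀ * b₀) := by
  have hn3 : (3 : ℝ) ≤ (n : ℝ) := by exact_mod_cast hn
  have hdist_meas : Measurable fun x : X => dist p x :=
    (Continuous.dist continuous_const continuous_id).measurable
  -- closed ball volume bound
  have hcb : ∀ R : ℝ, 0 ≤ R → μ (closedBall p R) ≤ ENNReal.ofReal (v₀ * R ^ n) := by
    intro R hR
    have hev : ∀ᶠ ε in nhdsWithin (0 : ℝ) (Ioi 0),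
        μ (closedBall p R) ≤ ENNReal.ofReal (v₀ * (R + ε) ^ n) := by
      filter_upwards [self_mem_nhdsWithin] with ε hε
      have hε' : 0 < ε := mem_Ioi.mp hε
      exact (measure_mono (closedBall_subset_ball (by linarith))).trans
        (hvol _ (by linarith))
    have htend : Filter.Tendsto (fun ε : ℝ => ENNReal.ofReal (v₀ * (R + ε) ^ n))
        (nhdsWithin 0 (Ioi 0)) (nhds (ENNReal.ofReal (v₀ * R ^ n))) := by
      have hc : Continuous fun ε : ℝ => ENNReal.ofReal (v₀ * (R + ε) ^ n) :=
        ENNReal.continuous_ofReal.comp (by continuity)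
      have := (hc.tendsto 0).mono_left (nhdsWithin_le_nhds (s := Ioi (0 : ℝ)))
      simpa using this
    exact ge_of_tendsto htend hev
  have hμp : μ {p} = 0 := by
    have h := hcb 0 le_rfl
    rw [closedBall_zero, zero_pow (by omega : n ≠ 0), mul_zero, ENNReal.ofReal_zero,
      le_zero_iff] at h
    exact h
  -- globalized profile
  set lam' : ℝ → ℝ := fun s => lam (max s 0) with hlam'_def
  have hlam'anti : Antitone lam' := fun a b hab =>
    hmono (le_max_right a 0) (le_max_right b 0) (max_le_max hab le_rfl)
  have hlam'nonneg : ∀ s, 0 ≤ lam' s := fun s => hnonneg _ (le_max_right s 0)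
  have hlam'eq : ∀ s : ℝ, 0 ≤ s → lam' s = lam s := by
    intro s hs
    rw [hlam'_def]
    simp [max_eq_left hs]
  have hlam'meas : Measurable lam' := hlam'anti.measurable
  have hb₀nn : 0 ≤ b₀ := by
    rw [hb₀]
    exact setIntegral_nonneg measurableSet_Ioi fun s hs =>
      mul_nonneg (le_of_lt hs) (hnonneg s (mem_Ici.mpr (le_of_lt hs)))
  -- the profile eventually drops below any positive level
  have hs₀ : ∀ u : ℝ, 0 < u → ∃ s₀ : ℝ, 0 ≤ s₀ ∧ lam s₀ ≤ u := by
    intro u hu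
    by_contra hcon
    push_neg at hcon
    have key : ∀ k : ℝ, 0 < k → u * k ^ 2 / 2 ≤ b₀ := by
      intro k hk
      have h1 : ∫ s in Ioc (0 : ℝ) k, u * s ≤ ∫ s in Ioc (0 : ℝ) k, s * lam s := by
        refine setIntegral_mono_on ?_ ?_ measurableSet_Ioc ?_
        · exact (continuous_const.mul continuous_id).integrableOn_Ioc
        · exact hint.mono_set Ioc_subset_Ioi_self
        · intro s hs
          have hs0 : 0 < s := hs.1
          have := hcon s hs0.le
          nlinarith
      have h2 : ∫ s in Ioc (0 : ℝ) k, s * lam s ≤ b₀ := by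
        rw [hb₀]
        refine setIntegral_mono_set hint ?_ ?_
        · filter_upwards [ae_restrict_mem measurableSet_Ioi] with s hs
          exact mul_nonneg (le_of_lt hs) (hnonneg s (mem_Ici.mpr (le_of_lt hs)))
        · exact HasSubset.Subset.eventuallyLE Ioc_subset_Ioi_self
      have h3 : ∫ s in Ioc (0 : ℝ) k, u * s = u * k ^ 2 / 2 := by
        rw [← intervalIntegral.integral_of_le hk.le, intervalIntegral.integral_const_mul,
          integral_id]
        ring
      linarith
    set k : ℝ := max 1 ((2 * b₀ + 2) / u) with hk_def
    have hk1 : (1 : ℝ) ≤ k := le_max_left _ _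
    have hk2 : (2 * b₀ + 2) / u ≤ k := le_max_right _ _
    have hkpos : (0 : ℝ) < k := lt_of_lt_of_le one_pos hk1
    have h4 : 2 * b₀ + 2 ≤ k * u := (div_le_iff₀ hu).mp hk2
    have hksq : k ≤ k ^ 2 := by nlinarith
    nlinarith [key k hkpos, mul_nonneg hu.le (sub_nonneg.mpr hksq)]
  -- the weight and the weighted measure
  set w : X → ℝ≥0∞ := fun x => ENNReal.ofReal (dist p x) ^ ((2 : ℝ) - n) with hw_def
  have hw_meas : Measurable w :=
    (ENNReal.measurable_ofReal.comp hdist_meas).pow_const _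
  set g : X → ℝ := fun x => lam' (dist p x / 2) with hg_def
  have hg_meas : Measurable g := hlam'meas.comp (hdist_meas.div_const 2)
  set ν : Measure X := μ.withDensity w with hν_def
  have hLHS : ∫⁻ x, ENNReal.ofReal (lam (dist p x / 2)) * w x ∂μ
      = ∫⁻ x, ENNReal.ofReal (g x) ∂ν := by
    have hwd := lintegral_withDensity_eq_lintegral_mul μ hw_meas
      (show Measurable fun x : X => ENNReal.ofReal (g x) from
        ENNReal.measurable_ofReal.comp hg_meas)
    rw [hν_def, hwd]
    refine lintegral_congr fun x => ?_
    simp only [Pi.mul_apply]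
    rw [mul_comm]
    congr 1
    show ENNReal.ofReal (lam (dist p x / 2)) = ENNReal.ofReal (lam' (dist p x / 2))
    rw [hlam'eq _ (by positivity : (0 : ℝ) ≤ dist p x / 2)]
  rw [hLHS, lintegral_eq_lintegral_meas_lt ν (ae_of_all _ fun x => hlam'nonneg _)
    hg_meas.aemeasurable]
  -- the auxiliary kernel
  set F : ℝ → ℝ → ℝ≥0∞ := fun u s => if u < lam' s then ENNReal.ofReal (2 * s) else 0
    with hF_def
  have hF_meas : Measurable (Function.uncurry F) := by
    have huc : Function.uncurry F
        = fun q : ℝ × ℝ => if q.1 < lam' q.2 then ENNReal.ofReal (2 * q.2) else 0 := rfl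
    rw [huc]
    exact Measurable.ite (measurableSet_lt measurable_fst (hlam'meas.comp measurable_snd))
      (ENNReal.measurable_ofReal.comp (measurable_snd.const_mul 2)) measurable_const
  -- pointwise bound on superlevel measures
  have hstep3 : ∀ u ∈ Ioi (0 : ℝ),
      ν {x | u < g x} ≤ ENNReal.ofReal (2 * n * v₀) * ∫⁻ s in Ioi (0 : ℝ), F u s := by
    intro u hu
    have hu' : 0 < u := mem_Ioi.mp hu
    obtain ⟨s₀, hs₀0, hs₀le⟩ := hs₀ u hu'
    set S : Set ℝ := {s | 0 ≤ s ∧ u < lam' s} with hS_def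
    have hbdd : BddAbove (insert 0 S) := by
      refine ⟨s₀, ?_⟩
      rintro s (rfl | ⟨hs0, hsu⟩)
      · exact hs₀0
      · by_contra hgt
        push_neg at hgt
        have h5 : lam' s ≤ lam' s₀ := hlam'anti hgt.le
        rw [hlam'eq s₀ hs₀0] at h5
        linarith
    set r : ℝ := sSup (insert 0 S) with hr_def
    have hr0 : 0 ≤ r := le_csSup hbdd (mem_insert 0 S)
    have hsub : {x | u < g x} ⊆ closedBall p (2 * r) := by
      intro x hx
      have hmem : dist p x / 2 ∈ S := ⟨by positivity, hx⟩
      have hle : dist p x / 2 ≤ r := le_csSup hbdd (mem_insert_of_mem _ hmem)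
      rw [mem_closedBall, dist_comm]
      linarith
    have h1 : ν {x | u < g x} ≤ ν (closedBall p (2 * r)) := measure_mono hsub
    have h2 : ν (closedBall p (2 * r)) = ∫⁻ x in closedBall p (2 * r), w x ∂μ :=
      withDensity_apply w measurableSet_closedBall
    have h3 := kato_aux_inner μ p n hn v₀ hv₀ hcb hμp (show (0 : ℝ) ≤ 2 * r by linarith)
    have h4 : ((n : ℝ) / 2) * v₀ * (2 * r) ^ 2 = 2 * n * v₀ * r ^ 2 := by ring
    have h5 : ENNReal.ofReal (r ^ 2) ≤ ∫⁻ s in Ioi (0 : ℝ), F u s := by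
      have hIoo : ∀ s ∈ Ioo (0 : ℝ) r, F u s = ENNReal.ofReal (2 * s) := by
        intro s hs
        obtain ⟨s', hs', hss'⟩ := exists_lt_of_lt_csSup (insert_nonempty _ _) hs.2
        rcases hs' with rfl | ⟨hs'0, hs'u⟩
        · linarith [hs.1]
        · have h6 : lam' s' ≤ lam' s := hlam'anti hss'.le
          rw [hF_def]
          simp only
          rw [if_pos (lt_of_lt_of_le hs'u h6)]
      have hi : IntegrableOn (fun s : ℝ => 2 * s) (Ioo 0 r) :=
        ((continuous_const.mul continuous_id).integrableOn_Ioc).mono_set Ioo_subset_Ioc_self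
      have hnn' : 0 ≤ᵐ[volume.restrict (Ioo (0 : ℝ) r)] fun s : ℝ => 2 * s := by
        filter_upwards [ae_restrict_mem measurableSet_Ioo] with s hs
        simp only [Pi.zero_apply]
        linarith [hs.1]
      have hval : ∫ s in Ioo (0 : ℝ) r, 2 * s = r ^ 2 := by
        rw [← integral_Ioc_eq_integral_Ioo, ← intervalIntegral.integral_of_le hr0,
          intervalIntegral.integral_const_mul, integral_id]
        ring
      calc ENNReal.ofReal (r ^ 2) = ∫⁻ s in Ioo (0 : ℝ) r, ENNReal.ofReal (2 * s) := by
            rw [← hval, ofReal_integral_eq_lintegral_ofReal hi hnn']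
        _ = ∫⁻ s in Ioo (0 : ℝ) r, F u s :=
            setLIntegral_congr_fun measurableSet_Ioo
              (fun s hs => (hIoo s hs).symm)
        _ ≤ ∫⁻ s in Ioi (0 : ℝ), F u s := lintegral_mono_set Ioo_subset_Ioi_self
    calc ν {x | u < g x} ≤ ENNReal.ofReal (((n : ℝ) / 2) * v₀ * (2 * r) ^ 2) :=
          h1.trans (h2 ▸ h3)
      _ = ENNReal.ofReal (2 * n * v₀) * ENNReal.ofReal (r ^ 2) := by
          rw [h4, ENNReal.ofReal_mul (by positivity)]
      _ ≤ _ := mul_le_mul_right h5 _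
  -- put everything together
  have hswap_meas : AEMeasurable (Function.uncurry F)
      ((volume.restrict (Ioi (0 : ℝ))).prod (volume.restrict (Ioi (0 : ℝ)))) :=
    hF_meas.aemeasurable
  have hinner_meas : Measurable fun u : ℝ =>
      ENNReal.ofReal (2 * n * v₀) * ∫⁻ s in Ioi (0 : ℝ), F u s :=
    (Measurable.lintegral_prod_right hF_meas).const_mul _
  calc ∫⁻ u in Ioi (0 : ℝ), ν {x | u < g x}
      ≤ ∫⁻ u in Ioi (0 : ℝ), ENNReal.ofReal (2 * n * v₀) * ∫⁻ s in Ioi (0 : ℝ), F u s :=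
        setLIntegral_mono hinner_meas hstep3
    _ = ENNReal.ofReal (2 * n * v₀)
        * ∫⁻ u in Ioi (0 : ℝ), ∫⁻ s in Ioi (0 : ℝ), F u s :=
        lintegral_const_mul' _ _ ENNReal.ofReal_ne_top
    _ = ENNReal.ofReal (2 * n * v₀)
        * ∫⁻ s in Ioi (0 : ℝ), ∫⁻ u in Ioi (0 : ℝ), F u s := by
        rw [lintegral_lintegral_swap hswap_meas]
    _ = ENNReal.ofReal (2 * n * v₀)
        * ∫⁻ s in Ioi (0 : ℝ), ENNReal.ofReal (2 * (s * lam s)) := by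
        congr 1
        refine setLIntegral_congr_fun measurableSet_Ioi (fun s hs => ?_)
        have hs' : 0 < s := mem_Ioi.mp hs
        have hind : ∀ u : ℝ, F u s
            = (Iio (lam' s)).indicator (fun _ => ENNReal.ofReal (2 * s)) u := by
          intro u
          rw [hF_def]
          simp only [indicator_apply, mem_Iio]
        calc ∫⁻ u in Ioi (0 : ℝ), F u s
            = ∫⁻ u in Ioi (0 : ℝ),
                (Iio (lam' s)).indicator (fun _ => ENNReal.ofReal (2 * s)) u := by
              simp_rw [hind]
          _ = ENNReal.ofReal (2 * s) * volume (Iio (lam' s) ∩ Ioi 0) := by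
              rw [lintegral_indicator measurableSet_Iio, setLIntegral_const,
                Measure.restrict_apply measurableSet_Iio]
          _ = ENNReal.ofReal (2 * s) * ENNReal.ofReal (lam' s) := by
              rw [Iio_inter_Ioi, Real.volume_Ioo, sub_zero]
          _ = ENNReal.ofReal (2 * (s * lam s)) := by
              rw [← ENNReal.ofReal_mul (by positivity), hlam'eq s hs'.le]
              ring_nf
    _ = ENNReal.ofReal (2 * n * v₀) * ENNReal.ofReal (2 * b₀) := by
        congr 1
        have hnnG : 0 ≤ᵐ[volume.restrict (Ioi (0 : ℝ))] fun s : ℝ => 2 * (s * lam s) := by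
          filter_upwards [ae_restrict_mem measurableSet_Ioi] with s hs
          have hs' : 0 < s := mem_Ioi.mp hs
          have := hnonneg s hs'.le
          positivity
        rw [← ofReal_integral_eq_lintegral_ofReal (hint.const_mul 2) hnnG,
          integral_const_mul, ← hb₀]
    _ = ENNReal.ofReal (2 * n * v₀ * (2 * b₀)) :=
        (ENNReal.ofReal_mul (by positivity)).symm
    _ ≤ ENNReal.ofReal (8 * (n + 1) * v₀ * b₀) := by
        apply ENNReal.ofReal_le_ofReal
        have hvb : (0 : ℝ) ≤ v₀ * b₀ := mul_nonneg hv₀.le hb₀nn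
        nlinarith [mul_nonneg (by linarith : (0 : ℝ) ≤ 4 * (n : ℝ) + 8) hvb]
end
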